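/- Assume that hypothesis (AC) holds and that ℰ is compact in 𝒵. Then the attainable set 𝒴_∞ is compact in 𝒳 and is invariant under S, in the sense that S(𝒴_∞ × ℰ) ⊆ 𝒴_∞. -/
import Mathlib


open MeasureTheory ProbabilityTheory Filter
open scoped NNReal ENNReal Topology

noncomputable section

/-- Trajectory of the random dynamical system `x_{n+1} = S x_n ζ_n` started at `x`. -/
def traj {X Z : Type*} (S : X → Z → X) (x : X) (ζ : ℕ → Z) : ℕ → X
  | 0 => x
  | n + 1 => S (traj S x ζ n) (ζ n)

/-- Support of a measure on a metric space: points all of whose balls have positive measure. -/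
def msupport {Z : Type*} [PseudoMetricSpace Z] [MeasurableSpace Z] (ℓ : Measure Z) : Set Z :=
  {z | ∀ ε : ℝ, 0 < ε → 0 < ℓ (Metric.ball z ε)}

/-- The attainable set `𝒴_n` in `n` steps from `Y`, with noises taken in `E`. -/
def attain {X Z : Type*} (S : X → Z → X) (E : Set Z) (Y : Set X) (n : ℕ) : Set X :=
  {y | ∃ x ∈ Y, ∃ ζ : ℕ → Z, (∀ k < n, ζ k ∈ E) ∧ y = traj S x ζ n}

/-- The attainable set `𝒴_∞`: closure of the union of the `𝒴_n`. -/
def attainInf {X Z : Type*} [TopologicalSpace X] (S : X → Z → X) (E : Set Z) (Y : Set X) :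
    Set X :=
  closure (⋃ n : ℕ, attain S E Y n)

/-- The law `P_n(x, ·)` of `x_n` started at `x`, where the noise is the i.i.d. sequence `ξ`
defined on the probability space `(Ω, P)`. -/
def lawFrom {X Z Ω : Type*} [MeasurableSpace X] [MeasurableSpace Ω]
    (S : X → Z → X) (P : Measure Ω) (ξ : ℕ → Ω → Z) (x : X) (n : ℕ) : Measure X :=
  Measure.map (fun ω => traj S x (fun k => ξ k ω) n) P

/-- The dual Markov semigroup `P_n^*` acting on measures. -/
def Pstar {X Z Ω : Type*} [MeasurableSpace X] [MeasurableSpace Ω]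
    (S : X → Z → X) (P : Measure Ω) (ξ : ℕ → Ω → Z) (n : ℕ) (ν : Measure X) : Measure X :=
  ν.bind fun x => lawFrom S P ξ x n

/-- The dual-Lipschitz distance `‖μ - ν‖_L^*` between measures on a metric space. -/
def dualLipDist {X : Type*} [MetricSpace X] [MeasurableSpace X] (μ ν : Measure X) : ℝ :=
  sSup {r | ∃ (f : X → ℝ) (K : ℝ≥0) (Cf : ℝ), LipschitzWith K f ∧ (∀ x, |f x| ≤ Cf) ∧
    Cf + (K : ℝ) ≤ 1 ∧ r = |∫ x, f x ∂μ - ∫ x, f x ∂ν|}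

lemma traj_congr {X Z : Type*} (S : X → Z → X) (x : X) {ζ ζ' : ℕ → Z} :
    ∀ n : ℕ, (∀ k < n, ζ k = ζ' k) → traj S x ζ n = traj S x ζ' n
  | 0, _ => rfl
  | n + 1, h => by
    have ih := traj_congr S x n (fun k hk => h k (hk.trans (Nat.lt_succ_self n)))
    simp only [traj, ih, h n (Nat.lt_succ_self n)]

lemma attain_zero {X Z : Type*} [Nonempty Z] (S : X → Z → X) (E : Set Z) (Y : Set X) :
    attain S E Y 0 = Y := by
  ext y
  constructor
  · rintro ⟨x, hx, ζ, -, rfl⟩; exact hx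
  · intro hy
    exact ⟨y, hy, fun _ => Classical.arbitrary Z, fun k hk => absurd hk (Nat.not_lt_zero k), rfl⟩

lemma attain_succ {X Z : Type*} (S : X → Z → X) (E : Set Z) (Y : Set X) (n : ℕ) :
    attain S E Y (n + 1) = (fun p : X × Z => S p.1 p.2) '' (attain S E Y n ×ˢ E) := by
  ext y
  constructor
  · rintro ⟨x, hx, ζ, hζ, rfl⟩
    exact ⟨(traj S x ζ n, ζ n),
      ⟨⟨x, hx, ζ, fun k hk => hζ k (hk.trans (Nat.lt_succ_self n)), rfl⟩,
        hζ n (Nat.lt_succ_self n)⟩, rfl⟩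
  · rintro ⟨⟨w, z⟩, ⟨⟨x, hx, ζ, hζ, rfl⟩, hz⟩, rfl⟩
    refine ⟨x, hx, fun k => if k < n then ζ k else z, ?_, ?_⟩
    · intro k hk
      by_cases hkn : k < n
      · simpa [hkn] using hζ k hkn
      · simpa [hkn] using hz
    · have h1 : traj S x ζ n = traj S x (fun k => if k < n then ζ k else z) n :=
        traj_congr S x n (fun k hk => by simp [hk])
      simp only [traj, ← h1, if_neg (lt_irrefl n)]

lemma attain_isCompact {X Z : Type*} [MetricSpace X] [MetricSpace Z] [Nonempty Z]
    {S : X → Z → X} (hScont : Continuous fun p : X × Z => S p.1 p.2)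
    {E : Set Z} (hE : IsCompact E) {Y : Set X} (hY : IsCompact Y) :
    ∀ n : ℕ, IsCompact (attain S E Y n)
  | 0 => by rw [attain_zero]; exact hY
  | n + 1 => by
    rw [attain_succ]
    exact ((attain_isCompact hScont hE hY n).prod hE).image hScont

/-- Under hypothesis (AC) and compactness of the support `ℰ` of `ℓ`,
the attainable set `𝒴_∞` is compact and invariant: `S(𝒴_∞ × ℰ) ⊆ 𝒴_∞`. -/
theorem attainInf_compact_invariant
    {X Z : Type*}
    [MetricSpace X] [CompleteSpace X] [TopologicalSpace.SeparableSpace X]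
    [MeasurableSpace X] [BorelSpace X]
    [MetricSpace Z] [CompleteSpace Z] [TopologicalSpace.SeparableSpace Z]
    [MeasurableSpace Z] [BorelSpace Z]
    (S : X → Z → X)
    (hScont : Continuous fun p : X × Z => S p.1 p.2)
    (hSlip : ∀ B : Set (X × Z), Bornology.IsBounded B →
      ∃ K : ℝ≥0, LipschitzOnWith K (fun p : X × Z => S p.1 p.2) B)
    (ℓ : Measure Z) [IsProbabilityMeasure ℓ]
    (hEcpt : IsCompact (msupport ℓ))
    -- (AC) asymptotic compactness
    (Y : Set X) (hYcpt : IsCompact Y) (κ : ℝ) (hκ : 0 < κ)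
    (V : X → ℝ) (hVmeas : Measurable V) (hVnonneg : ∀ x, 0 ≤ V x)
    (hVbdd : ∀ B : Set X, Bornology.IsBounded B → ∃ M : ℝ, ∀ x ∈ B, V x ≤ M)
    (hAC : ∀ (x : X) (ζ : ℕ → Z), (∀ k, ζ k ∈ msupport ℓ) → ∀ n : ℕ, 1 ≤ n →
      Metric.infDist (traj S x ζ n) Y ≤ V x * Real.exp (-(κ * n))) :
    IsCompact (attainInf S (msupport ℓ) Y) ∧
      ∀ x ∈ attainInf S (msupport ℓ) Y, ∀ ζ ∈ msupport ℓ,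
        S x ζ ∈ attainInf S (msupport ℓ) Y := by
  have hZ : Nonempty Z := by
    rcases isEmpty_or_nonempty Z with h | h
    · exfalso
      have h1 : ℓ Set.univ = 1 := measure_univ
      rw [Set.univ_eq_empty_iff.mpr h, measure_empty] at h1
      exact zero_ne_one h1
    · exact h
  set E := msupport ℓ with hE
  set U := ⋃ n : ℕ, attain S E Y n with hU
  constructor
  · -- compactness
    have htb : TotallyBounded U := by
      rw [Metric.totallyBounded_iff]
      intro ε hε
      obtain ⟨M, hM⟩ := hVbdd Y hYcpt.isBounded
      set M' := max M 0 with hM'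
      have hM'0 : 0 ≤ M' := le_max_right _ _
      -- choose N with M' * exp(-(κ N)) < ε/2
      have htend : Tendsto (fun n : ℕ => M' * Real.exp (-(κ * n))) atTop (𝓝 0) := by
        have h1 : ∀ n : ℕ, Real.exp (-(κ * n)) = Real.exp (-κ) ^ n := by
          intro n
          rw [← Real.exp_nat_mul]
          ring_nf
        simp only [h1]
        have h2 : Tendsto (fun n : ℕ => Real.exp (-κ) ^ n) atTop (𝓝 0) :=
          tendsto_pow_atTop_nhds_zero_of_lt_one (Real.exp_nonneg _)
            (Real.exp_lt_one_iff.mpr (neg_neg_iff_pos.mpr hκ))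
        simpa using h2.const_mul M'
      obtain ⟨N, hN1, hNlt⟩ : ∃ N : ℕ, 1 ≤ N ∧ M' * Real.exp (-(κ * N)) < ε / 2 := by
        have := (htend.eventually (gt_mem_nhds (half_pos hε))).and (eventually_ge_atTop 1)
        obtain ⟨N, hN⟩ := this.exists
        exact ⟨N, hN.2, hN.1⟩
      -- finite cover of the first N attain sets
      have hKcpt : IsCompact (⋃ n ∈ Finset.range N, attain S E Y n) := by
        apply (Finset.range N).finite_toSet.isCompact_biUnion
        intro n _
        exact attain_isCompact hScont hEcpt hYcpt n
      obtain ⟨t1, ht1fin, ht1⟩ := Metric.totallyBounded_iff.mp hKcpt.totallyBounded ε hε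
      obtain ⟨t2, ht2fin, ht2⟩ :=
        Metric.totallyBounded_iff.mp hYcpt.totallyBounded (ε / 2) (half_pos hε)
      refine ⟨t1 ∪ t2, ht1fin.union ht2fin, ?_⟩
      intro y hy
      obtain ⟨n, hyn⟩ : ∃ n, y ∈ attain S E Y n := Set.mem_iUnion.mp hy
      by_cases hn : n < N
      · have : y ∈ ⋃ n ∈ Finset.range N, attain S E Y n :=
          Set.mem_biUnion (Finset.mem_range.mpr hn) hyn
        obtain ⟨c, hc, hyc⟩ := Set.mem_iUnion₂.mp (ht1 this)
        exact Set.mem_biUnion (Set.mem_union_left _ hc) hyc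
      · push_neg at hn
        have hn1 : 1 ≤ n := hN1.trans hn
        obtain ⟨x, hx, ζ, hζ, rfl⟩ := hyn
        set ζ' : ℕ → Z := fun k => if k < n then ζ k else ζ 0 with hζ'def
        have hζ' : ∀ k, ζ' k ∈ E := by
          intro k
          by_cases hk : k < n
          · simpa [hζ'def, hk] using hζ k hk
          · simpa [hζ'def, hk] using hζ 0 hn1
        have htraj : traj S x ζ n = traj S x ζ' n :=
          traj_congr S x n (fun k hk => by simp [hζ'def, hk])
        have hac := hAC x ζ' hζ' n hn1
        rw [← htraj] at hac
        have hexp : Real.exp (-(κ * n)) ≤ Real.exp (-(κ * N)) := by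
          apply Real.exp_le_exp.mpr
          have : (N : ℝ) ≤ n := Nat.cast_le.mpr hn
          nlinarith
        have hlt : Metric.infDist (traj S x ζ n) Y < ε / 2 := by
          calc Metric.infDist (traj S x ζ n) Y ≤ V x * Real.exp (-(κ * n)) := hac
            _ ≤ M' * Real.exp (-(κ * n)) := by
                apply mul_le_mul_of_nonneg_right _ (Real.exp_nonneg _)
                exact (hM x hx).trans (le_max_left _ _)
            _ ≤ M' * Real.exp (-(κ * N)) := mul_le_mul_of_nonneg_left hexp hM'0
            _ < ε / 2 := hNlt
        obtain ⟨p, hp, hpd⟩ := (Metric.infDist_lt_iff ⟨x, hx⟩).mp hlt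
        obtain ⟨c, hc, hpc⟩ := Set.mem_iUnion₂.mp (ht2 hp)
        refine Set.mem_biUnion (Set.mem_union_right _ hc) ?_
        rw [Metric.mem_ball] at hpc ⊢
        calc dist (traj S x ζ n) c ≤ dist (traj S x ζ n) p + dist p c := dist_triangle _ _ _
          _ < ε / 2 + ε / 2 := add_lt_add hpd hpc
          _ = ε := add_halves ε
    exact TotallyBounded.isCompact_of_isClosed htb.closure isClosed_closure
  · -- invariance
    intro x hx ζ hζ
    have hf : Continuous fun y : X => S y ζ :=
      hScont.comp (continuous_id.prodMk continuous_const)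
    have h1 : S x ζ ∈ (fun y => S y ζ) '' closure U := ⟨x, hx, rfl⟩
    have h2 : S x ζ ∈ closure ((fun y => S y ζ) '' U) :=
      image_closure_subset_closure_image hf h1
    refine closure_mono ?_ h2
    rintro _ ⟨y, hy, rfl⟩
    obtain ⟨n, hyn⟩ := Set.mem_iUnion.mp hy
    refine Set.mem_iUnion.mpr ⟨n + 1, ?_⟩
    rw [attain_succ]
    exact ⟨(y, ζ), ⟨hyn, hζ⟩, rfl⟩
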